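/- arXiv:2009.02454 — 3 statements merged into one kernel-verified Lean document; each statement's English description precedes it below -/
import Mathlib

section
/- Localization of the infimum: suppose n > C. Then for every x ∈ E, the infimum defining fₙ(x) may be restricted to a ball, namely fₙ(x) = ⨅ { f(a) + n‖x − a‖ : a ∈ E, ‖x − a‖ ≤ 2C(h + ‖x‖)/(n − C) }. -/
/-- Localization of the infimum: for `n > C`, the infimum defining
`fₙ(x) = ⨅ a, (f a + n‖x − a‖)` may be restricted to the ball
`‖x − a‖ ≤ 2C(h + ‖x‖)/(n − C)`. -/
theorem stmt_3 {E : Type*} [NormedAddCommGroup E] [NormedSpace ℝ E]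
    (C h : ℝ) (hC : 0 ≤ C) (hh : 0 ≤ h)
    (f : E → ℝ) (hf : ∀ a : E, |f a| ≤ C * (h + ‖a‖))
    (n : ℝ) (hn : C < n) (x : E) :
    (⨅ a : E, f a + n * ‖x - a‖) =
      sInf {v : ℝ | ∃ a : E, ‖x - a‖ ≤ 2 * C * (h + ‖x‖) / (n - C) ∧
        v = f a + n * ‖x - a‖} := by
  have hnc : 0 < n - C := sub_pos.2 hn
  set B := C * (h + ‖x‖) with hBdef
  have hB : 0 ≤ B := mul_nonneg hC (by positivity)
  set g : E → ℝ := fun a => f a + n * ‖x - a‖ with hg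
  set S := {v : ℝ | ∃ a : E, ‖x - a‖ ≤ 2 * C * (h + ‖x‖) / (n - C) ∧
        v = f a + n * ‖x - a‖} with hS
  have key : ∀ a : E, -B + (n - C) * ‖x - a‖ ≤ g a := by
    intro a
    have h1 : -(C * (h + ‖a‖)) ≤ f a := neg_le_of_abs_le (hf a)
    have h2 : ‖a‖ ≤ ‖x‖ + ‖x - a‖ := by
      have := norm_sub_norm_le x a
      have := norm_sub_rev x a
      have := norm_sub_norm_le a x
      linarith [norm_sub_rev a x ▸ norm_sub_norm_le a x]
    have h3 : 0 ≤ ‖x - a‖ := norm_nonneg _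
    simp only [hg, hBdef]
    nlinarith
  have keylb : ∀ a : E, -B ≤ g a := fun a => by
    have := key a
    nlinarith [norm_nonneg (x - a), hnc.le]
  have hxS : f x ∈ S := by
    refine ⟨x, ?_, by simp⟩
    simp only [sub_self, norm_zero]
    positivity
  have Sne : S.Nonempty := ⟨f x, hxS⟩
  have Sbdd : BddBelow S := by
    refine ⟨-B, fun v hv => ?_⟩
    obtain ⟨a, _, rfl⟩ := hv
    exact keylb a
  have Rbdd : BddBelow (Set.range g) := by
    refine ⟨-B, fun v hv => ?_⟩
    obtain ⟨a, rfl⟩ := hv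
    exact keylb a
  apply le_antisymm
  · refine le_csInf Sne fun v hv => ?_
    obtain ⟨a, _, rfl⟩ := hv
    exact ciInf_le Rbdd a
  · refine le_ciInf fun a => ?_
    by_cases hball : ‖x - a‖ ≤ 2 * C * (h + ‖x‖) / (n - C)
    · exact csInf_le Sbdd ⟨a, hball, rfl⟩
    · push_neg at hball
      have h4 : 2 * B ≤ (n - C) * ‖x - a‖ := by
        rw [div_lt_iff₀ hnc] at hball
        nlinarith
      have h5 : f x ≤ B := le_of_abs_le (hf x)
      have h6 : f x ≤ g a := by
        have := key a
        linarith
      exact (csInf_le Sbdd hxS).trans h6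
end

section
/- Pointwise monotone convergence: suppose in addition that f is continuous. Then for every x ∈ E, the nondecreasing sequence (fₙ(x))_{n ≥ C} converges to f(x) as n → ∞; equivalently, sup over real n ≥ C of fₙ(x) equals f(x). -/
open Filter Topology

/-- Pointwise monotone convergence of the Lipschitz approximations: if `f` is
continuous with linear growth `|f a| ≤ C(h + ‖a‖)`, then for every `x`,
`fₙ(x) = ⨅ a, (f a + n‖x − a‖)` converges to `f(x)` as `n → ∞`; equivalently,
the supremum of `fₙ(x)` over real `n ≥ C` equals `f(x)`. -/
theorem stmt_4 {E : Type*} [NormedAddCommGroup E] [NormedSpace ℝ E]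
    (C h : ℝ) (hC : 0 ≤ C) (hh : 0 ≤ h)
    (f : E → ℝ) (hf : ∀ a : E, |f a| ≤ C * (h + ‖a‖))
    (hcont : Continuous f) (x : E) :
    Tendsto (fun n : ℝ => ⨅ a : E, f a + n * ‖x - a‖) atTop (𝓝 (f x)) ∧
    (⨆ n : {n : ℝ // C ≤ n}, ⨅ a : E, f a + (n : ℝ) * ‖x - a‖) = f x := by
  set g : ℝ → ℝ := fun n => ⨅ a : E, f a + n * ‖x - a‖ with hg
  have lb : ∀ n, C ≤ n → ∀ a : E, -(C * (h + ‖x‖)) ≤ f a + n * ‖x - a‖ := by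
    intro n hn a
    have h1 : -(C * (h + ‖a‖)) ≤ f a := neg_le_of_abs_le (hf a)
    have h2 : C * ‖x - a‖ ≤ n * ‖x - a‖ :=
      mul_le_mul_of_nonneg_right hn (norm_nonneg _)
    have h3 : ‖a‖ - ‖x‖ ≤ ‖x - a‖ := by
      have := norm_sub_norm_le a x
      rwa [norm_sub_rev] at this
    nlinarith [norm_nonneg (x - a), norm_nonneg a, norm_nonneg x]
  have bdd : ∀ n, C ≤ n → BddBelow (Set.range fun a : E => f a + n * ‖x - a‖) :=
    fun n hn => ⟨_, Set.forall_mem_range.mpr fun a => lb n hn a⟩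
  have gle : ∀ n, C ≤ n → g n ≤ f x := by
    intro n hn
    have := ciInf_le (bdd n hn) x
    simpa using this
  have key : ∀ ε > 0, ∃ N, C ≤ N ∧ ∀ n ≥ N, f x - ε ≤ g n := by
    intro ε hε
    obtain ⟨δ, hδ, hδ'⟩ := Metric.continuousAt_iff.mp (hcont.continuousAt (x := x)) ε hε
    set M := max (f x + C * (h + ‖x‖)) 0 with hMdef
    have hM0 : 0 ≤ M := le_max_right _ _
    have hMd : 0 ≤ M / δ := div_nonneg hM0 hδ.le
    refine ⟨C + M / δ + 1, by linarith, fun n hn => le_ciInf fun a => ?_⟩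
    have hn0 : 0 ≤ n := by linarith
    by_cases hlt : ‖x - a‖ < δ
    · have hdist : dist a x < δ := by
        rw [dist_eq_norm, ← norm_sub_rev]; exact hlt
      have := hδ' hdist
      rw [Real.dist_eq, abs_lt] at this
      nlinarith [norm_nonneg (x - a)]
    · push_neg at hlt
      have hMδ : M / δ * δ = M := div_mul_cancel₀ _ hδ.ne'
      have hnC : M / δ + 1 ≤ n - C := by linarith
      have hmul : (M / δ + 1) * δ ≤ (n - C) * ‖x - a‖ :=
        mul_le_mul hnC hlt hδ.le (by linarith)
      have hM1 : f x + C * (h + ‖x‖) ≤ M := le_max_left _ _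
      have hlbC := lb C le_rfl a
      nlinarith
  constructor
  · rw [Metric.tendsto_atTop]
    intro ε hε
    obtain ⟨N, hNC, hN⟩ := key (ε / 2) (by linarith)
    refine ⟨N, fun n hn => ?_⟩
    have h1 := hN n hn
    have h2 := gle n (hNC.trans hn)
    rw [Real.dist_eq, abs_lt]
    constructor <;> linarith
  · haveI : Nonempty {n : ℝ // C ≤ n} := ⟨⟨C, le_rfl⟩⟩
    have bddA : BddAbove (Set.range fun n : {n : ℝ // C ≤ n} => g (n : ℝ)) :=
      ⟨f x, Set.forall_mem_range.mpr fun n => gle n n.2⟩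
    refine le_antisymm (ciSup_le fun n => gle n n.2) ?_
    refine le_of_forall_pos_le_add fun ε hε => ?_
    obtain ⟨N, hNC, hN⟩ := key ε hε
    have := le_ciSup bddA ⟨N, hNC⟩
    have h1 := hN N le_rfl
    linarith
end

section
/- Stability of the approximation along convergent sequences (Lemma 3.5(vii) of the paper): suppose in addition that f is continuous, and let (x_n)_{n ∈ ℕ} be a sequence in E with x_n → x as n → ∞. Then f_n(x_n) → f(x) as n → ∞ (where f_n denotes the inf-convolution with parameter n, real-valued for n ≥ C). -/
open Filter Topology

/-- Lemma 3.5(vii): stability of the Lipschitz approximation along convergent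
sequences: if `f` is continuous with linear growth and `x_n → x`, then
`f_n(x_n) = ⨅ a, (f a + n‖x_n − a‖) → f(x)` as `n → ∞`. -/
theorem stmt_5 {E : Type*} [NormedAddCommGroup E] [NormedSpace ℝ E]
    (C h : ℝ) (hC : 0 ≤ C) (hh : 0 ≤ h)
    (f : E → ℝ) (hf : ∀ a : E, |f a| ≤ C * (h + ‖a‖))
    (hcont : Continuous f)
    (x : ℕ → E) (x₀ : E) (hx : Tendsto x atTop (𝓝 x₀)) :
    Tendsto (fun n : ℕ => ⨅ a : E, f a + (n : ℝ) * ‖x n - a‖) atTop (𝓝 (f x₀)) := by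
  rw [Metric.tendsto_atTop]
  intro ε hε
  obtain ⟨δ, hδ, hδf⟩ := Metric.continuous_iff.mp hcont x₀ (ε/2) (half_pos hε)
  obtain ⟨N₁, hN₁⟩ := (Metric.tendsto_atTop.mp hx) (δ/2) (half_pos hδ)
  set K : ℝ := f x₀ - ε/2 + C*h + C*(‖x₀‖ + δ/2) with hKdef
  set K' : ℝ := max K 0 with hK'def
  have hK'0 : (0:ℝ) ≤ K' := le_max_right _ _
  have hKK : K ≤ K' := le_max_left _ _
  obtain ⟨M, hM⟩ := exists_nat_ge (C + 2*K'/δ)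
  refine ⟨max N₁ M, fun n hn => ?_⟩
  have hn1 : N₁ ≤ n := le_trans (le_max_left _ _) hn
  have hn2 : (M:ℝ) ≤ (n:ℝ) := Nat.cast_le.mpr (le_trans (le_max_right _ _) hn)
  have hnC : C + 2*K'/δ ≤ (n:ℝ) := hM.trans hn2
  have hnC' : C ≤ (n:ℝ) := by
    have : (0:ℝ) ≤ 2*K'/δ := by positivity
    linarith
  have hxn : dist (x n) x₀ < δ/2 := hN₁ n hn1
  have hxn' : ‖x n - x₀‖ < δ/2 := by rwa [dist_eq_norm] at hxn
  have hxnb : ‖x n‖ ≤ ‖x₀‖ + δ/2 := by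
    have := norm_sub_norm_le (x n) x₀
    linarith
  -- lower bound for all a
  have hlow : ∀ a : E, f x₀ - ε/2 ≤ f a + (n:ℝ) * ‖x n - a‖ := by
    intro a
    rcases lt_or_ge ‖x n - a‖ (δ/2) with hcase | hcase
    · have htri : ‖a - x₀‖ ≤ ‖a - x n‖ + ‖x n - x₀‖ := norm_sub_le_norm_sub_add_norm_sub _ _ _
      have hrev : ‖a - x n‖ < δ/2 := by rwa [norm_sub_rev] at hcase
      have hax : dist a x₀ < δ := by
        rw [dist_eq_norm]; linarith
      have hfa := hδf a hax
      rw [Real.dist_eq] at hfa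
      have h1 : f x₀ - ε/2 ≤ f a := by
        have := (abs_lt.mp hfa).1; linarith
      have h2 : 0 ≤ (n:ℝ) * ‖x n - a‖ := by positivity
      linarith
    · have hfa : -(C*(h+‖a‖)) ≤ f a := neg_le_of_abs_le (hf a)
      have hna : ‖a‖ - ‖x n‖ ≤ ‖x n - a‖ := by
        have := norm_sub_norm_le a (x n)
        rwa [norm_sub_rev] at this
      have key : K' ≤ ((n:ℝ) - C) * ‖x n - a‖ := by
        have h1 : 2*K'/δ ≤ (n:ℝ) - C := by linarith
        have h2 : 2*K'/δ * (δ/2) ≤ ((n:ℝ)-C) * ‖x n - a‖ :=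
          mul_le_mul h1 hcase (by positivity) (by linarith)
        have h3 : 2*K'/δ*(δ/2) = K' := by field_simp
        linarith
      rw [sub_mul] at key
      have hmul1 : C*‖a‖ ≤ C*(‖x n‖ + ‖x n - a‖) :=
        mul_le_mul_of_nonneg_left (by linarith) hC
      have hmul2 : C*‖x n‖ ≤ C*(‖x₀‖ + δ/2) :=
        mul_le_mul_of_nonneg_left hxnb hC
      have hexp : C*(h+‖a‖) = C*h + C*‖a‖ := by ring
      have hexp2 : C*(‖x n‖ + ‖x n - a‖) = C*‖x n‖ + C*‖x n - a‖ := by ring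
      rw [hKdef] at hKK
      linarith [hKK]
  have hbdd : BddBelow (Set.range fun a : E => f a + (n:ℝ) * ‖x n - a‖) :=
    ⟨f x₀ - ε/2, by rintro _ ⟨a, rfl⟩; exact hlow a⟩
  have hlower : f x₀ - ε/2 ≤ ⨅ a : E, f a + (n:ℝ) * ‖x n - a‖ := le_ciInf hlow
  have hupper : (⨅ a : E, f a + (n:ℝ) * ‖x n - a‖) ≤ f x₀ + ε/2 := by
    have h1 : (⨅ a : E, f a + (n:ℝ) * ‖x n - a‖) ≤ f (x n) + (n:ℝ) * ‖x n - x n‖ :=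
      ciInf_le hbdd (x n)
    simp only [sub_self, norm_zero, mul_zero, add_zero] at h1
    have hax : dist (x n) x₀ < δ := by linarith
    have hfa := hδf (x n) hax
    rw [Real.dist_eq] at hfa
    have := (abs_lt.mp hfa).2
    linarith
  rw [Real.dist_eq, abs_lt]
  constructor <;> linarith
end
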